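/- Let v : Finset (Fin m) → ℝ be subadditive (v(T ∪ T') ≤ v(T) + v(T') for all T, T' ⊆ Fin m), let p be an item pricing, let S ⊆ Fin m, and let A* ⊆ Fin m be a set maximizing T ↦ v(T) − p(T) over all subsets T of Fin m. Then max_{T ⊆ S} ( v(T) − (1/2)·p(T) ) ≥ (1/2) · p(A* ∩ S). -/
import Mathlib

open Finset

/-- The total price of a bundle of items under an item pricing `p`. -/
def priceOf {m : ℕ} (p : Fin m → ℝ) (T : Finset (Fin m)) : ℝ := ∑ j ∈ T, p j

/-- For a subadditive valuation `v`, an item pricing `p`, a set `S`,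
and a utility-maximizing bundle `A*` over all items, the best utility over subsets of `S`
at half prices is at least `p(A* ∩ S)/2`. -/
theorem subadditive_half_price_utility
    (m : ℕ) (hm : 1 ≤ m)
    (v : Finset (Fin m) → ℝ)
    (hsub : ∀ T T' : Finset (Fin m), v (T ∪ T') ≤ v T + v T')
    (p : Fin m → ℝ) (hp : ∀ j, 0 ≤ p j)
    (S : Finset (Fin m))
    (Astar : Finset (Fin m))
    (hAstar : ∀ T : Finset (Fin m), v T - priceOf p T ≤ v Astar - priceOf p Astar) :
    ∃ T ⊆ S, (1 / 2) * priceOf p (Astar ∩ S) ≤ v T - (1 / 2) * priceOf p T := by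
  refine ⟨Astar ∩ S, inter_subset_right, ?_⟩
  have heq : Astar ∩ S ∪ Astar \ S = Astar := by
    ext x; simp only [mem_union, mem_inter, mem_sdiff]; tauto
  have hsplit : priceOf p Astar = priceOf p (Astar ∩ S) + priceOf p (Astar \ S) := by
    unfold priceOf
    rw [← Finset.sum_union (Finset.disjoint_of_subset_left inter_subset_right
      disjoint_sdiff), heq]
  have h1 := hAstar (Astar \ S)
  have h2 : v Astar ≤ v (Astar ∩ S) + v (Astar \ S) := by
    have := hsub (Astar ∩ S) (Astar \ S)
    rwa [heq] at this
  linarith
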